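/- Let α ∈ 𝒢(n), γ ∈ 𝒢(m), let j be a labelled vertex of γ, let β ∈ 𝒢(n+m−1), and let E be the set of extensions (u, v) of γ by α at j with middle graph exactly β. Then: (i) the group Aut(β) acts freely on E by θ·(u, v) := (θ∘u, v∘θ⁻¹), and its orbits are precisely the equivalence classes of extensions; (ii) for each subgraph S ⊆ β, the group Aut(α) × Aut(γ) acts freely and transitively on the (possibly empty) set of extensions (u, v) ∈ E with u(α) = S, via (a, c)·(u, v) := (u∘a⁻¹, c∘v). Consequently the number of extensions in E with a fixed image subgraph S is either 0 or |Aut(α)|·|Aut(γ)|. (Counting core of the paper's Lemma on partial composition.) -/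

import Mathlib

attribute [local instance] Classical.propDecidable

/-- A finite directed multigraph with `n` labelled vertices (the elements of `Fin n`)
and a finite set `V` of unlabelled vertices. -/
structure PreGraph (n : ℕ) where
  V : Type
  E : Type
  finV : Finite V
  finE : Finite E
  src : E → Fin n ⊕ V
  tgt : E → Fin n ⊕ V

attribute [instance] PreGraph.finV PreGraph.finE

namespace PreGraph

/-- `γ ∈ 𝒢(n)`: every unlabelled vertex has valency ≥ 1. -/
def IsGraph {n : ℕ} (γ : PreGraph n) : Prop :=
  ∀ v : γ.V, ∃ e : γ.E, γ.src e = Sum.inr v ∨ γ.tgt e = Sum.inr v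

/-- The two endpoints of "an edge or a vertex" (a vertex counting as a degenerate edge). -/
def ends {m : ℕ} (β : PreGraph m) : β.E ⊕ (Fin m ⊕ β.V) → (Fin m ⊕ β.V) × (Fin m ⊕ β.V)
  | Sum.inl e => (β.src e, β.tgt e)
  | Sum.inr x => (x, x)

end PreGraph

/-- A morphism of labelled graphs: vertices map to vertices, edges map to edges or collapse
to vertices, sources and targets are respected, and labelled vertices map to labelled
vertices preserving their order. -/
structure GMor {n m : ℕ} (α : PreGraph n) (β : PreGraph m) where
  onL : Fin n → Fin m
  monoL : Monotone onL
  onV : Fin n ⊕ α.V → Fin m ⊕ β.V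
  hL : ∀ i : Fin n, onV (Sum.inl i) = Sum.inl (onL i)
  onE : α.E → β.E ⊕ (Fin m ⊕ β.V)
  hE : ∀ e : α.E, β.ends (onE e) = (onV (α.src e), onV (α.tgt e))

namespace GMor

/-- Auxiliary: the action of a morphism on "edges or vertices". -/
def compE {m p : ℕ} {β : PreGraph m} {γ : PreGraph p} (g : GMor β γ) :
    β.E ⊕ (Fin m ⊕ β.V) → γ.E ⊕ (Fin p ⊕ γ.V)
  | Sum.inl e => g.onE e
  | Sum.inr x => Sum.inr (g.onV x)

theorem ends_compE {m p : ℕ} {β : PreGraph m} {γ : PreGraph p} (g : GMor β γ)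
    (x : β.E ⊕ (Fin m ⊕ β.V)) :
    γ.ends (g.compE x) = (g.onV (β.ends x).1, g.onV (β.ends x).2) := by
  cases x with
  | inl e => exact g.hE e
  | inr y => rfl

/-- Composition of graph morphisms. -/
def comp {n m p : ℕ} {α : PreGraph n} {β : PreGraph m} {γ : PreGraph p}
    (g : GMor β γ) (f : GMor α β) : GMor α γ where
  onL := g.onL ∘ f.onL
  monoL := g.monoL.comp f.monoL
  onV := g.onV ∘ f.onV
  hL := fun i => by simp only [Function.comp_apply, f.hL i, g.hL (f.onL i)]
  onE := fun e => g.compE (f.onE e)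
  hE := fun e => by rw [ends_compE, f.hE e]; rfl

end GMor

/-- An isomorphism of labelled graphs (fixing the labels pointwise). -/
structure GIso {n : ℕ} (α β : PreGraph n) where
  eV : α.V ≃ β.V
  eE : α.E ≃ β.E
  hsrc : ∀ e : α.E, β.src (eE e) = Sum.map id eV (α.src e)
  htgt : ∀ e : α.E, β.tgt (eE e) = Sum.map id eV (α.tgt e)

/-- An isomorphism, regarded as a morphism. -/
def GIso.toGMor {n : ℕ} {α β : PreGraph n} (θ : GIso α β) : GMor α β where
  onL := id
  monoL := monotone_id
  onV := Sum.map id θ.eV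
  hL := fun _ => rfl
  onE := fun e => Sum.inl (θ.eE e)
  hE := fun e => by simp only [PreGraph.ends, θ.hsrc e, θ.htgt e]

/-- The collapse map on labels: `qmap n j` sends the window `[j, j+n]` of `Fin (n+m+1)` to `j`
and is the order-preserving bijection elsewhere. -/
def qmap (n : ℕ) {m : ℕ} (j : Fin (m + 1)) (i : Fin (n + m + 1)) : Fin (m + 1) :=
  if h : i.val ≤ j.val then ⟨i.val, by have := j.isLt; omega⟩
  else if h2 : i.val ≤ j.val + n then j
  else ⟨i.val - n, by have := i.isLt; omega⟩

/-- `(u, v)` is an extension of `γ` by `α` at the labelled vertex `j`, with middle graph `β`: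
`u : α ↪ β` is injective, `v : β ↠ γ` is surjective, `u(α) = v⁻¹(j)`, and the restriction of
`v` to the complement of `u(α)` is injective. -/
structure IsExtension {n m : ℕ} {α : PreGraph (n + 1)} {β : PreGraph (n + m + 1)}
    {γ : PreGraph (m + 1)} (j : Fin (m + 1)) (u : GMor α β) (v : GMor β γ) : Prop where
  uLab : ∀ i : Fin (n + 1), (u.onL i).val = j.val + i.val
  vLab : ∀ i : Fin (n + m + 1), v.onL i = qmap n j i
  uVinj : Function.Injective u.onV
  uEedge : ∀ e : α.E, ∃ e' : β.E, u.onE e = Sum.inl e'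
  uEinj : Function.Injective u.onE
  vVsurj : Function.Surjective v.onV
  vEsurj : ∀ e' : γ.E, ∃ e : β.E, v.onE e = Sum.inl e'
  imV : Set.range u.onV = {x | v.onV x = Sum.inl j}
  imE : {e' : β.E | ∃ e : α.E, u.onE e = Sum.inl e'} =
    {e' : β.E | v.onE e' = Sum.inr (Sum.inl j)}
  compEedge : ∀ e' : β.E, (¬ ∃ e : α.E, u.onE e = Sum.inl e') →
    ∃ eγ : γ.E, v.onE e' = Sum.inl eγ
  compVinj : Set.InjOn v.onV {x | x ∉ Set.range u.onV}
  compEinj : Set.InjOn v.onE {e' : β.E | ¬ ∃ e : α.E, u.onE e = Sum.inl e'}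

/-- The inverse of a graph isomorphism. -/
def GIso.symm {n : ℕ} {α β : PreGraph n} (θ : GIso α β) : GIso β α where
  eV := θ.eV.symm
  eE := θ.eE.symm
  hsrc := fun e => by
    have h := θ.hsrc (θ.eE.symm e)
    rw [θ.eE.apply_symm_apply] at h
    rw [h]
    cases α.src (θ.eE.symm e) <;> simp
  htgt := fun e => by
    have h := θ.htgt (θ.eE.symm e)
    rw [θ.eE.apply_symm_apply] at h
    rw [h]
    cases α.tgt (θ.eE.symm e) <;> simp

/-- An extension of `γ` by `α` at `j` with middle graph `β`. -/
structure ExtAt {n m : ℕ} (α : PreGraph (n + 1)) (γ : PreGraph (m + 1)) (j : Fin (m + 1))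
    (β : PreGraph (n + m + 1)) where
  u : GMor α β
  v : GMor β γ
  ext : IsExtension j u v

/-- A subgraph of `β`: sets of vertices and edges closed under taking endpoints. -/
structure SubG {p : ℕ} (β : PreGraph p) where
  SV : Set (Fin p ⊕ β.V)
  SE : Set β.E
  closed : ∀ e ∈ SE, β.src e ∈ SV ∧ β.tgt e ∈ SV

/-- The image of the injective morphism `u` is the subgraph `S`. -/
def HasImage {n p : ℕ} {α : PreGraph n} {β : PreGraph p} (u : GMor α β) (S : SubG β) :
    Prop :=
  Set.range u.onV = S.SV ∧ {e' : β.E | ∃ e : α.E, u.onE e = Sum.inl e'} = S.SE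

section Aux

theorem GMor.ext' {n m : ℕ} {α : PreGraph n} {β : PreGraph m} {f g : GMor α β}
    (hV : f.onV = g.onV) (hE : f.onE = g.onE) : f = g := by
  have hL : f.onL = g.onL := by
    funext i
    have h : Sum.inl (f.onL i) = (Sum.inl (g.onL i) : Fin m ⊕ β.V) := by
      rw [← f.hL, ← g.hL, hV]
    exact Sum.inl.inj h
  cases f; cases g; simp_all

theorem GIso.ext' {n : ℕ} {α β : PreGraph n} {f g : GIso α β}
    (hV : ∀ w, f.eV w = g.eV w) (hE : ∀ e, f.eE e = g.eE e) : f = g := by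
  have h1 : f.eV = g.eV := Equiv.ext hV
  have h2 : f.eE = g.eE := Equiv.ext hE
  cases f; cases g; simp_all

@[simp] theorem GMor.comp_onL {n m p : ℕ} {α : PreGraph n} {β : PreGraph m} {γ : PreGraph p}
    (g : GMor β γ) (f : GMor α β) (i : Fin n) : (g.comp f).onL i = g.onL (f.onL i) := rfl

@[simp] theorem GMor.comp_onV {n m p : ℕ} {α : PreGraph n} {β : PreGraph m} {γ : PreGraph p}
    (g : GMor β γ) (f : GMor α β) (x) : (g.comp f).onV x = g.onV (f.onV x) := rfl

@[simp] theorem GMor.comp_onE {n m p : ℕ} {α : PreGraph n} {β : PreGraph m} {γ : PreGraph p}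
    (g : GMor β γ) (f : GMor α β) (e : α.E) : (g.comp f).onE e = g.compE (f.onE e) := rfl

@[simp] theorem GIso.toGMor_onL {n : ℕ} {α β : PreGraph n} (θ : GIso α β) (i : Fin n) :
    θ.toGMor.onL i = i := rfl

@[simp] theorem GIso.toGMor_onV {n : ℕ} {α β : PreGraph n} (θ : GIso α β) (x) :
    θ.toGMor.onV x = Sum.map id θ.eV x := rfl

@[simp] theorem GIso.toGMor_onE {n : ℕ} {α β : PreGraph n} (θ : GIso α β) (e : α.E) :
    θ.toGMor.onE e = Sum.inl (θ.eE e) := rfl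

@[simp] theorem GIso.symm_eV {n : ℕ} {α β : PreGraph n} (θ : GIso α β) :
    θ.symm.eV = θ.eV.symm := rfl

@[simp] theorem GIso.symm_eE {n : ℕ} {α β : PreGraph n} (θ : GIso α β) :
    θ.symm.eE = θ.eE.symm := rfl

@[simp] theorem GMor.compE_inl {m p : ℕ} {β : PreGraph m} {γ : PreGraph p} (g : GMor β γ)
    (e : β.E) : g.compE (Sum.inl e) = g.onE e := rfl

@[simp] theorem GMor.compE_inr {m p : ℕ} {β : PreGraph m} {γ : PreGraph p} (g : GMor β γ)
    (x) : g.compE (Sum.inr x) = Sum.inr (g.onV x) := rfl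

theorem mapV_symm_left {n : ℕ} {α β : PreGraph n} (θ : GIso α β) (x : Fin n ⊕ α.V) :
    Sum.map id θ.eV.symm (Sum.map id θ.eV x) = x := by cases x <;> simp

theorem mapV_symm_right {n : ℕ} {α β : PreGraph n} (θ : GIso α β) (x : Fin n ⊕ β.V) :
    Sum.map id θ.eV (Sum.map id θ.eV.symm x) = x := by cases x <;> simp

theorem mapV_inj {n : ℕ} {α β : PreGraph n} (θ : GIso α β) :
    Function.Injective (Sum.map id θ.eV : Fin n ⊕ α.V → Fin n ⊕ β.V) :=
  Function.LeftInverse.injective (mapV_symm_left θ)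

theorem mapV_surj {n : ℕ} {α β : PreGraph n} (θ : GIso α β) :
    Function.Surjective (Sum.map id θ.eV : Fin n ⊕ α.V → Fin n ⊕ β.V) :=
  Function.RightInverse.surjective (mapV_symm_right θ)

/-- cancel: (g ∘ θ) ∘ θ⁻¹ = g -/
theorem cancelA {n p : ℕ} {β β' : PreGraph n} {γ : PreGraph p} (θ : GIso β' β)
    (g : GMor β γ) : (GMor.comp (GMor.comp g θ.toGMor) θ.symm.toGMor) = g := by
  refine GMor.ext' (funext fun x => ?_) (funext fun e => ?_)
  · simp [mapV_symm_right]
  · simp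

theorem cancelB {n p : ℕ} {β β' : PreGraph n} {γ : PreGraph p} (θ : GIso β β')
    (g : GMor β γ) : (GMor.comp (GMor.comp g θ.symm.toGMor) θ.toGMor) = g := by
  refine GMor.ext' (funext fun x => ?_) (funext fun e => ?_)
  · simp [mapV_symm_left]
  · simp

end Aux
section Part1

variable {n m : ℕ} {α : PreGraph (n + 1)} {β : PreGraph (n + m + 1)} {γ : PreGraph (m + 1)}
  {j : Fin (m + 1)}

theorem imV_iff {u : GMor α β} {v : GMor β γ} (h : IsExtension j u v) (x) :
    x ∈ Set.range u.onV ↔ v.onV x = Sum.inl j := Set.ext_iff.1 h.imV x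

theorem imE_iff {u : GMor α β} {v : GMor β γ} (h : IsExtension j u v) (e' : β.E) :
    (∃ e : α.E, u.onE e = Sum.inl e') ↔ v.onE e' = Sum.inr (Sum.inl j) :=
  Set.ext_iff.1 h.imE e'

theorem part1 (θ : GIso β β) (u : GMor α β) (v : GMor β γ) (h : IsExtension j u v) :
    IsExtension j (GMor.comp θ.toGMor u) (GMor.comp v θ.symm.toGMor) := by
  constructor
  · intro i; simpa using h.uLab i
  · intro i; simpa using h.vLab i
  · intro x y hxy
    simp only [GMor.comp_onV] at hxy
    exact h.uVinj (mapV_inj θ hxy)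
  · intro e
    obtain ⟨e', he'⟩ := h.uEedge e
    exact ⟨θ.eE e', by simp [he']⟩
  · intro e e' hee
    simp only [GMor.comp_onE] at hee
    obtain ⟨e1, he1⟩ := h.uEedge e
    obtain ⟨e2, he2⟩ := h.uEedge e'
    rw [he1, he2] at hee
    simp only [GMor.compE_inl, GIso.toGMor_onE, Sum.inl.injEq] at hee
    exact h.uEinj (by rw [he1, he2, θ.eE.injective hee])
  · intro y
    obtain ⟨x, hx⟩ := h.vVsurj y
    exact ⟨Sum.map id θ.eV x, by simpa [mapV_symm_left]⟩
  · intro e'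
    obtain ⟨e, he⟩ := h.vEsurj e'
    exact ⟨θ.eE e, by simpa⟩
  · ext x
    simp only [Set.mem_range, GMor.comp_onV, Set.mem_setOf_eq, GIso.toGMor_onV,
      GIso.symm_eV]
    constructor
    · rintro ⟨y, rfl⟩
      rw [mapV_symm_left]
      exact (imV_iff h _).1 ⟨y, rfl⟩
    · intro hx
      obtain ⟨y, hy⟩ := (imV_iff h _).2 hx
      exact ⟨y, by rw [hy, mapV_symm_right]⟩
  · ext e'
    simp only [Set.mem_setOf_eq, GMor.comp_onE]
    constructor
    · rintro ⟨e, he⟩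
      obtain ⟨e1, he1⟩ := h.uEedge e
      rw [he1] at he
      simp only [GMor.compE_inl, GIso.toGMor_onE, Sum.inl.injEq] at he
      simp only [GIso.toGMor_onE, GIso.symm_eE, GMor.compE_inl]
      rw [← he, Equiv.symm_apply_apply]
      exact (imE_iff h e1).1 ⟨e, he1⟩
    · intro he
      simp only [GIso.toGMor_onE, GIso.symm_eE, GMor.compE_inl] at he
      obtain ⟨e, he2⟩ := (imE_iff h _).2 he
      exact ⟨e, by rw [he2]; simp⟩
  · intro e' hne
    have hne2 : ¬ ∃ e : α.E, u.onE e = Sum.inl (θ.eE.symm e') := by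
      rintro ⟨e, he⟩
      exact hne ⟨e, by simp [he]⟩
    obtain ⟨eγ, heγ⟩ := h.compEedge _ hne2
    exact ⟨eγ, by simpa⟩
  · intro x hx y hy hxy
    simp only [Set.mem_setOf_eq, Set.mem_range, GMor.comp_onV] at hx hy
    simp only [GMor.comp_onV, GIso.toGMor_onV, GIso.symm_eV] at hxy
    have hx' : Sum.map id θ.eV.symm x ∉ Set.range u.onV := by
      rintro ⟨z, hz⟩
      exact hx ⟨z, by rw [GIso.toGMor_onV, hz, mapV_symm_right]⟩
    have hy' : Sum.map id θ.eV.symm y ∉ Set.range u.onV := by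
      rintro ⟨z, hz⟩
      exact hy ⟨z, by rw [GIso.toGMor_onV, hz, mapV_symm_right]⟩
    have := h.compVinj hx' hy' hxy
    calc x = Sum.map id θ.eV (Sum.map id θ.eV.symm x) := (mapV_symm_right θ x).symm
    _ = Sum.map id θ.eV (Sum.map id θ.eV.symm y) := by rw [this]
    _ = y := mapV_symm_right θ y
  · intro x hx y hy hxy
    simp only [Set.mem_setOf_eq, GMor.comp_onE] at hx hy
    simp only [GMor.comp_onE, GIso.toGMor_onE, GIso.symm_eE, GMor.compE_inl] at hxy
    have hx' : ¬ ∃ e : α.E, u.onE e = Sum.inl (θ.eE.symm x) := by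
      rintro ⟨e, he⟩
      exact hx ⟨e, by simp [he]⟩
    have hy' : ¬ ∃ e : α.E, u.onE e = Sum.inl (θ.eE.symm y) := by
      rintro ⟨e, he⟩
      exact hy ⟨e, by simp [he]⟩
    have := h.compEinj hx' hy' hxy
    calc x = θ.eE (θ.eE.symm x) := (θ.eE.apply_symm_apply x).symm
    _ = θ.eE (θ.eE.symm y) := by rw [this]
    _ = y := θ.eE.apply_symm_apply y

end Part1
section Part2

variable {n m : ℕ} {α : PreGraph (n + 1)} {β : PreGraph (n + m + 1)} {γ : PreGraph (m + 1)}
  {j : Fin (m + 1)}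

theorem part2 (θ : GIso β β) (u : GMor α β) (v : GMor β γ) (h : IsExtension j u v)
    (hθu : GMor.comp θ.toGMor u = u) (hθv : GMor.comp v θ.symm.toGMor = v) :
    (∀ w : β.V, θ.eV w = w) ∧ (∀ e : β.E, θ.eE e = e) := by
  have hθuV : ∀ x, Sum.map id θ.eV (u.onV x) = u.onV x := fun x =>
    congrFun (congrArg GMor.onV hθu) x
  have hθuE : ∀ e, θ.toGMor.compE (u.onE e) = u.onE e := fun e =>
    congrFun (congrArg GMor.onE hθu) e
  have hθvV : ∀ x, v.onV (Sum.map id θ.eV.symm x) = v.onV x := fun x =>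
    congrFun (congrArg GMor.onV hθv) x
  have hθvE : ∀ e, v.onE (θ.eE.symm e) = v.onE e := fun e => by
    have := congrFun (congrArg GMor.onE hθv) e
    simpa using this
  constructor
  · intro w
    by_cases hw : Sum.inr w ∈ Set.range u.onV
    · obtain ⟨y, hy⟩ := hw
      have := hθuV y
      rw [hy] at this
      simpa using this
    · have h1 : Sum.map id θ.eV.symm (Sum.inr w) ∉ Set.range u.onV := by
        rw [imV_iff h, hθvV, ← imV_iff h]
        exact hw
      have h2 := h.compVinj h1 hw (hθvV (Sum.inr w))
      have h3 : θ.eV.symm w = w := Sum.inr.inj h2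
      rw [← h3, θ.eV.apply_symm_apply]
      exact h3.symm
  · intro e
    by_cases he : ∃ e₀ : α.E, u.onE e₀ = Sum.inl e
    · obtain ⟨e₀, he₀⟩ := he
      have := hθuE e₀
      rw [he₀] at this
      simpa using this
    · have h1 : ¬ ∃ e₀ : α.E, u.onE e₀ = Sum.inl (θ.eE.symm e) := by
        rw [imE_iff h, hθvE, ← imE_iff h]
        exact he
      have h2 := h.compEinj h1 he (hθvE e)
      rw [← h2, θ.eE.apply_symm_apply]
      exact h2.symm

end Part2
section Part4

variable {n m : ℕ} {α : PreGraph (n + 1)} {β : PreGraph (n + m + 1)} {γ : PreGraph (m + 1)}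
  {j : Fin (m + 1)}

theorem mapC_eq_inl {p : ℕ} {γ : PreGraph p} (c : GIso γ γ) (y : Fin p ⊕ γ.V) (i : Fin p) :
    Sum.map id c.eV y = Sum.inl i ↔ y = Sum.inl i := by
  cases y <;> simp

theorem part4 (a : GIso α α) (c : GIso γ γ) (S : SubG β) (u : GMor α β) (v : GMor β γ)
    (h : IsExtension j u v) (hS : HasImage u S) :
    IsExtension j (GMor.comp u a.symm.toGMor) (GMor.comp c.toGMor v) ∧
      HasImage (GMor.comp u a.symm.toGMor) S := by
  have hrangeV : Set.range (GMor.comp u a.symm.toGMor).onV = Set.range u.onV := by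
    ext x
    simp only [Set.mem_range, GMor.comp_onV]
    constructor
    · rintro ⟨y, rfl⟩; exact ⟨_, rfl⟩
    · rintro ⟨y, rfl⟩
      exact ⟨Sum.map id a.eV y, by rw [GIso.toGMor_onV, GIso.symm_eV, mapV_symm_left]⟩
  have honE : ∀ e, (GMor.comp u a.symm.toGMor).onE e = u.onE (a.eE.symm e) := fun e => by
    simp
  have hrangeE : {e' : β.E | ∃ e, (GMor.comp u a.symm.toGMor).onE e = Sum.inl e'} =
      {e' : β.E | ∃ e, u.onE e = Sum.inl e'} := by
    ext e'
    simp only [Set.mem_setOf_eq, honE]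
    constructor
    · rintro ⟨e, he⟩; exact ⟨_, he⟩
    · rintro ⟨e, he⟩; exact ⟨a.eE e, by rwa [Equiv.symm_apply_apply]⟩
  refine ⟨⟨?_, ?_, ?_, ?_, ?_, ?_, ?_, ?_, ?_, ?_, ?_, ?_⟩, ?_⟩
  · intro i; simpa using h.uLab i
  · intro i; simpa using h.vLab i
  · intro x y hxy
    simp only [GMor.comp_onV, GIso.toGMor_onV, GIso.symm_eV] at hxy
    have := h.uVinj hxy
    calc x = Sum.map id a.eV (Sum.map id a.eV.symm x) := (mapV_symm_right a x).symm
    _ = Sum.map id a.eV (Sum.map id a.eV.symm y) := by rw [this]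
    _ = y := mapV_symm_right a y
  · intro e
    rw [honE]
    exact h.uEedge _
  · intro e e' hee
    rw [honE, honE] at hee
    have := h.uEinj hee
    calc e = a.eE (a.eE.symm e) := (a.eE.apply_symm_apply e).symm
    _ = a.eE (a.eE.symm e') := by rw [this]
    _ = e' := a.eE.apply_symm_apply e'
  · intro y
    obtain ⟨y₀, hy₀⟩ := mapV_surj c y
    obtain ⟨x, hx⟩ := h.vVsurj y₀
    exact ⟨x, by simp [hx, hy₀]⟩
  · intro e'
    obtain ⟨e, he⟩ := h.vEsurj (c.eE.symm e')
    exact ⟨e, by simp [he]⟩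
  · rw [hrangeV, h.imV]
    ext x
    simp only [Set.mem_setOf_eq, GMor.comp_onV, GIso.toGMor_onV]
    exact (mapC_eq_inl c (v.onV x) j).symm
  · rw [hrangeE, h.imE]
    ext e'
    simp only [Set.mem_setOf_eq, GMor.comp_onE]
    constructor
    · intro hv; rw [hv]; simp
    · intro hv
      cases hve : v.onE e' with
      | inl e => rw [hve] at hv; simp at hv
      | inr y =>
        rw [hve] at hv
        simp only [GMor.compE_inr, GIso.toGMor_onV, Sum.inr.injEq] at hv
        exact congrArg Sum.inr ((mapC_eq_inl c y j).1 hv)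
  · intro e' hne
    rw [hrangeE] at *
    have hne2 : ¬ ∃ e, u.onE e = Sum.inl e' := by
      rintro ⟨e, he⟩
      exact hne ⟨a.eE e, by rw [honE, Equiv.symm_apply_apply]; exact he⟩
    obtain ⟨eγ, heγ⟩ := h.compEedge e' hne2
    exact ⟨c.eE eγ, by simp [heγ]⟩
  · intro x hx y hy hxy
    rw [Set.mem_setOf_eq, hrangeV] at hx hy
    simp only [GMor.comp_onV] at hxy
    exact h.compVinj hx hy (mapV_inj c hxy)
  · intro x hx y hy hxy
    have hsame : ∀ z : β.E, (¬ ∃ e, (GMor.comp u a.symm.toGMor).onE e = Sum.inl z) ↔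
        (¬ ∃ e, u.onE e = Sum.inl z) := fun z => by
      rw [show (∃ e, (GMor.comp u a.symm.toGMor).onE e = Sum.inl z) ↔
        (∃ e, u.onE e = Sum.inl z) from Set.ext_iff.1 hrangeE z]
    rw [Set.mem_setOf_eq, hsame] at hx hy
    simp only [GMor.comp_onE] at hxy
    apply h.compEinj hx hy
    cases hvx : v.onE x with
    | inl e =>
      cases hvy : v.onE y with
      | inl e2 =>
        rw [hvx, hvy] at hxy
        simp only [GMor.compE_inl, GIso.toGMor_onE, Sum.inl.injEq] at hxy
        rw [c.eE.injective hxy]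
      | inr y2 => rw [hvx, hvy] at hxy; simp at hxy
    | inr y1 =>
      cases hvy : v.onE y with
      | inl e2 => rw [hvx, hvy] at hxy; simp at hxy
      | inr y2 =>
        rw [hvx, hvy] at hxy
        simp only [GMor.compE_inr, Sum.inr.injEq] at hxy
        rw [mapV_inj c hxy]
  · exact ⟨hrangeV.trans hS.1, hrangeE.trans hS.2⟩

end Part4
section Part5

variable {n m : ℕ} {α : PreGraph (n + 1)} {β : PreGraph (n + m + 1)} {γ : PreGraph (m + 1)}
  {j : Fin (m + 1)}

theorem part5 (a : GIso α α) (c : GIso γ γ) (u : GMor α β) (v : GMor β γ)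
    (h : IsExtension j u v) (hau : GMor.comp u a.symm.toGMor = u)
    (hcv : GMor.comp c.toGMor v = v) :
    ((∀ w : α.V, a.eV w = w) ∧ (∀ e : α.E, a.eE e = e)) ∧
      ((∀ w : γ.V, c.eV w = w) ∧ (∀ e : γ.E, c.eE e = e)) := by
  refine ⟨⟨fun w => ?_, fun e => ?_⟩, ⟨fun w => ?_, fun e => ?_⟩⟩
  · have := congrFun (congrArg GMor.onV hau) (Sum.inr w)
    simp only [GMor.comp_onV, GIso.toGMor_onV, GIso.symm_eV, Sum.map_inr] at this
    have h3 : a.eV.symm w = w := Sum.inr.inj (h.uVinj this)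
    rw [← h3, Equiv.apply_symm_apply]
    exact h3.symm
  · have := congrFun (congrArg GMor.onE hau) e
    simp only [GMor.comp_onE, GIso.toGMor_onE, GIso.symm_eE, GMor.compE_inl] at this
    have h3 : a.eE.symm e = e := h.uEinj this
    rw [← h3, Equiv.apply_symm_apply]
    exact h3.symm
  · obtain ⟨x, hx⟩ := h.vVsurj (Sum.inr w)
    have := congrFun (congrArg GMor.onV hcv) x
    simp only [GMor.comp_onV, GIso.toGMor_onV, hx, Sum.map_inr] at this
    exact Sum.inr.inj this
  · obtain ⟨x, hx⟩ := h.vEsurj e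
    have := congrFun (congrArg GMor.onE hcv) x
    simp only [GMor.comp_onE, hx, GMor.compE_inl, GIso.toGMor_onE, Sum.inl.injEq] at this
    exact this

end Part5
section Part6

variable {n m : ℕ} {α : PreGraph (n + 1)} {β : PreGraph (n + m + 1)} {γ : PreGraph (m + 1)}
  {j : Fin (m + 1)}

theorem qmap_surj (n : ℕ) {m : ℕ} (j : Fin (m + 1)) (i : Fin (m + 1)) :
    ∃ k : Fin (n + m + 1), qmap n j k = i := by
  by_cases h : i.val ≤ j.val
  · refine ⟨⟨i.val, by omega⟩, ?_⟩
    unfold qmap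
    rw [dif_pos h]
  · refine ⟨⟨i.val + n, by have := i.isLt; omega⟩, ?_⟩
    unfold qmap
    rw [dif_neg (by simp; omega), dif_neg (by simp; omega)]
    exact Fin.ext (by simp)

/-- Labelled values of `v` transfer to `v'`. -/
theorem labelV {u u' : GMor α β} {v v' : GMor β γ} (h : IsExtension j u v)
    (h' : IsExtension j u' v') (hrV : Set.range u.onV = Set.range u'.onV)
    (y : Fin (n + m + 1) ⊕ β.V) (i : Fin (m + 1)) (hy : v.onV y = Sum.inl i) :
    v'.onV y = Sum.inl i := by
  by_cases hij : i = j
  · subst hij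
    have : y ∈ Set.range u'.onV := hrV ▸ (imV_iff h y).2 hy
    exact (imV_iff h' y).1 this
  · obtain ⟨k, hk⟩ := qmap_surj n j i
    have h1 : v.onV (Sum.inl k) = Sum.inl i := by rw [v.hL, h.vLab, hk]
    have hy' : y ∉ Set.range u.onV := by
      rw [imV_iff h, hy]
      simp [hij]
    have hk' : (Sum.inl k : Fin (n+m+1) ⊕ β.V) ∉ Set.range u.onV := by
      rw [imV_iff h, h1]
      simp [hij]
    have h2 := h.compVinj hy' hk' (hy.trans h1.symm)
    rw [h2, v'.hL, h'.vLab, hk]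

/-- Every edge of `β` maps under `v` either to `inr (inl j)` or to an edge. -/
theorem edge_val {u : GMor α β} {v : GMor β γ} (h : IsExtension j u v) (x : β.E) :
    v.onE x = Sum.inr (Sum.inl j) ∨ ∃ e, v.onE x = Sum.inl e := by
  by_cases hx : ∃ e, u.onE e = Sum.inl x
  · exact Or.inl ((imE_iff h x).1 hx)
  · exact Or.inr (h.compEedge x hx)

/-- `v`-images determine `v'`-images on vertices. -/
theorem keyV {u u' : GMor α β} {v v' : GMor β γ} (h : IsExtension j u v)
    (h' : IsExtension j u' v') (hrV : Set.range u.onV = Set.range u'.onV)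
    (x x' : Fin (n + m + 1) ⊕ β.V) (hxx : v.onV x = v.onV x') : v'.onV x = v'.onV x' := by
  by_cases hx : v.onV x = Sum.inl j
  · have e1 : v'.onV x = Sum.inl j := (imV_iff h' x).1 (hrV ▸ (imV_iff h x).2 hx)
    have e2 : v'.onV x' = Sum.inl j :=
      (imV_iff h' x').1 (hrV ▸ (imV_iff h x').2 (hxx ▸ hx))
    rw [e1, e2]
  · have h1 : x ∉ Set.range u.onV := by rw [imV_iff h]; exact hx
    have h2 : x' ∉ Set.range u.onV := by rw [imV_iff h, ← hxx]; exact hx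
    rw [h.compVinj h1 h2 hxx]

/-- `v`-images determine `v'`-images on edges. -/
theorem keyE {u u' : GMor α β} {v v' : GMor β γ} (h : IsExtension j u v)
    (h' : IsExtension j u' v')
    (hrE : {e' : β.E | ∃ e, u.onE e = Sum.inl e'} = {e' : β.E | ∃ e, u'.onE e = Sum.inl e'})
    (x x' : β.E) (hxx : v.onE x = v.onE x') : v'.onE x = v'.onE x' := by
  by_cases hx : v.onE x = Sum.inr (Sum.inl j)
  · have m1 : ∃ e, u'.onE e = Sum.inl x := Set.ext_iff.1 hrE x |>.1 ((imE_iff h x).2 hx)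
    have m2 : ∃ e, u'.onE e = Sum.inl x' :=
      Set.ext_iff.1 hrE x' |>.1 ((imE_iff h x').2 (hxx ▸ hx))
    rw [(imE_iff h' x).1 m1, (imE_iff h' x').1 m2]
  · have h1 : ¬ ∃ e, u.onE e = Sum.inl x := by rw [imE_iff h]; exact hx
    have h2 : ¬ ∃ e, u.onE e = Sum.inl x' := by rw [imE_iff h, ← hxx]; exact hx
    rw [h.compEinj h1 h2 hxx]

end Part6
section Part6b

variable {n m : ℕ} {α : PreGraph (n + 1)} {β : PreGraph (n + m + 1)} {γ : PreGraph (m + 1)}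
  {j : Fin (m + 1)}

theorem onL_eq {u u' : GMor α β} {v v' : GMor β γ} (h : IsExtension j u v)
    (h' : IsExtension j u' v') : u.onL = u'.onL := by
  funext i
  exact Fin.ext (by rw [h.uLab, h'.uLab])

theorem aV_exists {u u' : GMor α β} {v v' : GMor β γ} (h : IsExtension j u v)
    (h' : IsExtension j u' v') (hrV : Set.range u.onV = Set.range u'.onV) (w : α.V) :
    ∃ w₀ : α.V, u.onV (Sum.inr w₀) = u'.onV (Sum.inr w) := by
  have : u'.onV (Sum.inr w) ∈ Set.range u.onV := hrV ▸ Set.mem_range_self _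
  obtain ⟨y, hy⟩ := this
  cases y with
  | inl i =>
    exfalso
    have : u'.onV (Sum.inl i) = u'.onV (Sum.inr w) := by
      rw [u'.hL, ← onL_eq h h', ← u.hL, hy]
    exact Sum.inl_ne_inr (h'.uVinj this)
  | inr w₀ => exact ⟨w₀, hy⟩

theorem aE_exists {u u' : GMor α β} {v v' : GMor β γ} (h : IsExtension j u v)
    (h' : IsExtension j u' v')
    (hrE : {e' : β.E | ∃ e, u.onE e = Sum.inl e'} = {e' : β.E | ∃ e, u'.onE e = Sum.inl e'})
    (e : α.E) : ∃ e₀ : α.E, u.onE e₀ = u'.onE e := by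
  obtain ⟨e'', he''⟩ := h'.uEedge e
  have : ∃ e₀, u.onE e₀ = Sum.inl e'' := Set.ext_iff.1 hrE e'' |>.2 ⟨e, he''⟩
  obtain ⟨e₀, he₀⟩ := this
  exact ⟨e₀, by rw [he₀, he'']⟩

theorem cV_exists {u u' : GMor α β} {v v' : GMor β γ} (h : IsExtension j u v)
    (h' : IsExtension j u' v') (hrV : Set.range u.onV = Set.range u'.onV) (w : γ.V) :
    ∃ w' : γ.V, ∀ x, v.onV x = Sum.inr w → v'.onV x = Sum.inr w' := by
  obtain ⟨x₀, hx₀⟩ := h.vVsurj (Sum.inr w)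
  cases hvx : v'.onV x₀ with
  | inl i =>
    exfalso
    have := labelV h' h hrV.symm x₀ i hvx
    rw [hx₀] at this
    exact Sum.inr_ne_inl this
  | inr w' =>
    refine ⟨w', fun x hx => ?_⟩
    rw [keyV h h' hrV x x₀ (hx.trans hx₀.symm), hvx]

theorem cE_exists {u u' : GMor α β} {v v' : GMor β γ} (h : IsExtension j u v)
    (h' : IsExtension j u' v')
    (hrE : {e' : β.E | ∃ e, u.onE e = Sum.inl e'} = {e' : β.E | ∃ e, u'.onE e = Sum.inl e'})
    (e : γ.E) : ∃ e₂ : γ.E, ∀ x, v.onE x = Sum.inl e → v'.onE x = Sum.inl e₂ := by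
  obtain ⟨x₀, hx₀⟩ := h.vEsurj e
  have hnx₀ : ¬ ∃ e₁, u'.onE e₁ = Sum.inl x₀ := by
    intro hc
    have : v.onE x₀ = Sum.inr (Sum.inl j) :=
      (imE_iff h x₀).1 (Set.ext_iff.1 hrE x₀ |>.2 hc)
    rw [hx₀] at this
    exact Sum.inl_ne_inr this
  obtain ⟨e₂, he₂⟩ := h'.compEedge x₀ hnx₀
  refine ⟨e₂, fun x hx => ?_⟩
  rw [keyE h h' hrE x x₀ (hx.trans hx₀.symm), he₂]

end Part6b
section Part6c

variable {n m : ℕ} {α : PreGraph (n + 1)} {β : PreGraph (n + m + 1)} {γ : PreGraph (m + 1)}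
  {j : Fin (m + 1)}

theorem part6 (S : SubG β) (u : GMor α β) (v : GMor β γ) (u' : GMor α β) (v' : GMor β γ)
    (hx : IsExtension j u v) (hx' : IsExtension j u' v') (hS : HasImage u S)
    (hS' : HasImage u' S) :
    ∃ (a : GIso α α) (c : GIso γ γ),
      GMor.comp u a.symm.toGMor = u' ∧ GMor.comp c.toGMor v = v' := by
  have hrV : Set.range u.onV = Set.range u'.onV := hS.1.trans hS'.1.symm
  have hrE : {e' : β.E | ∃ e, u.onE e = Sum.inl e'} =
      {e' : β.E | ∃ e, u'.onE e = Sum.inl e'} := hS.2.trans hS'.2.symm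
  -- construct a
  choose aInv haInv using aV_exists hx hx' hrV
  choose aFun haFun using aV_exists hx' hx hrV.symm
  have aLI : ∀ w, aInv (aFun w) = w := fun w => by
    have : u.onV (Sum.inr (aInv (aFun w))) = u.onV (Sum.inr w) := by
      rw [haInv, haFun]
    exact Sum.inr.inj (hx.uVinj this)
  have aRI : ∀ w, aFun (aInv w) = w := fun w => by
    have : u'.onV (Sum.inr (aFun (aInv w))) = u'.onV (Sum.inr w) := by
      rw [haFun, haInv]
    exact Sum.inr.inj (hx'.uVinj this)
  choose aEInv haEInv using aE_exists hx hx' hrE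
  choose aEFun haEFun using aE_exists hx' hx hrE.symm
  have aELI : ∀ e, aEInv (aEFun e) = e := fun e => by
    have : u.onE (aEInv (aEFun e)) = u.onE e := by rw [haEInv, haEFun]
    exact hx.uEinj this
  have aERI : ∀ e, aEFun (aEInv e) = e := fun e => by
    have : u'.onE (aEFun (aEInv e)) = u'.onE e := by rw [haEFun, haEInv]
    exact hx'.uEinj this
  have mapComp : ∀ y : Fin (n + 1) ⊕ α.V, u'.onV (Sum.map id aFun y) = u.onV y := by
    intro y
    cases y with
    | inl i => rw [Sum.map_inl, u'.hL, u.hL, id_eq, onL_eq hx hx']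
    | inr w => exact haFun w
  refine ⟨⟨⟨aFun, aInv, aLI, aRI⟩, ⟨aEFun, aEInv, aELI, aERI⟩, fun e => ?_, fun e => ?_⟩,
    ?_⟩
  · -- hsrc for a
    apply hx'.uVinj
    have h1 := u'.hE (aEFun e)
    rw [haEFun e] at h1
    have h2 := u.hE e
    have h3 : u'.onV (α.src (aEFun e)) = u.onV (α.src e) :=
      congrArg Prod.fst (h1.symm.trans h2)
    show u'.onV (α.src (aEFun e)) = u'.onV (Sum.map id _ (α.src e))
    rw [h3]
    exact (mapComp (α.src e)).symm
  · apply hx'.uVinj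
    have h1 := u'.hE (aEFun e)
    rw [haEFun e] at h1
    have h2 := u.hE e
    have h3 : u'.onV (α.tgt (aEFun e)) = u.onV (α.tgt e) :=
      congrArg Prod.snd (h1.symm.trans h2)
    show u'.onV (α.tgt (aEFun e)) = u'.onV (Sum.map id _ (α.tgt e))
    rw [h3]
    exact (mapComp (α.tgt e)).symm
  -- construct c
  choose cFun hcFun using cV_exists hx hx' hrV
  choose cInv hcInv using cV_exists hx' hx hrV.symm
  have cLI : ∀ w, cInv (cFun w) = w := fun w => by
    obtain ⟨x₀, hx₀⟩ := hx.vVsurj (Sum.inr w)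
    have h1 := hcFun w x₀ hx₀
    have h2 := hcInv (cFun w) x₀ h1
    rw [hx₀] at h2
    exact (Sum.inr.inj h2).symm
  have cRI : ∀ w, cFun (cInv w) = w := fun w => by
    obtain ⟨x₀, hx₀⟩ := hx'.vVsurj (Sum.inr w)
    have h1 := hcInv w x₀ hx₀
    have h2 := hcFun (cInv w) x₀ h1
    rw [hx₀] at h2
    exact (Sum.inr.inj h2).symm
  choose cEFun hcEFun using cE_exists hx hx' hrE
  choose cEInv hcEInv using cE_exists hx' hx hrE.symm
  have cELI : ∀ e, cEInv (cEFun e) = e := fun e => by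
    obtain ⟨x₀, hx₀⟩ := hx.vEsurj e
    have h1 := hcEFun e x₀ hx₀
    have h2 := hcEInv (cEFun e) x₀ h1
    rw [hx₀] at h2
    exact (Sum.inl.inj h2).symm
  have cERI : ∀ e, cEFun (cEInv e) = e := fun e => by
    obtain ⟨x₀, hx₀⟩ := hx'.vEsurj e
    have h1 := hcEInv e x₀ hx₀
    have h2 := hcEFun (cEInv e) x₀ h1
    rw [hx₀] at h2
    exact (Sum.inl.inj h2).symm
  have compatV : ∀ y, v'.onV y = Sum.map id cFun (v.onV y) := by
    intro y
    cases hvy : v.onV y with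
    | inl i => rw [labelV hx hx' hrV y i hvy, Sum.map_inl, id_eq]
    | inr w => rw [hcFun w y hvy, Sum.map_inr]
  refine ⟨⟨⟨cFun, cInv, cLI, cRI⟩, ⟨cEFun, cEInv, cELI, cERI⟩, fun e => ?_, fun e => ?_⟩,
    ?_, ?_⟩
  · -- hsrc for c
    obtain ⟨x₀, hx₀⟩ := hx.vEsurj e
    have h1 := v.hE x₀
    rw [hx₀] at h1
    have h2 := v'.hE x₀
    rw [hcEFun e x₀ hx₀] at h2
    have hs1 : γ.src e = v.onV (β.src x₀) := congrArg Prod.fst h1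
    have hs2 : γ.src (cEFun e) = v'.onV (β.src x₀) := congrArg Prod.fst h2
    show γ.src (cEFun e) = Sum.map id _ (γ.src e)
    rw [hs2, hs1]
    exact compatV (β.src x₀)
  · obtain ⟨x₀, hx₀⟩ := hx.vEsurj e
    have h1 := v.hE x₀
    rw [hx₀] at h1
    have h2 := v'.hE x₀
    rw [hcEFun e x₀ hx₀] at h2
    have hs1 : γ.tgt e = v.onV (β.tgt x₀) := congrArg Prod.snd h1
    have hs2 : γ.tgt (cEFun e) = v'.onV (β.tgt x₀) := congrArg Prod.snd h2
    show γ.tgt (cEFun e) = Sum.map id _ (γ.tgt e)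
    rw [hs2, hs1]
    exact compatV (β.tgt x₀)
  · -- comp u a.symm.toGMor = u'
    refine GMor.ext' (funext fun y => ?_) (funext fun e => ?_)
    · simp only [GMor.comp_onV, GIso.toGMor_onV, GIso.symm_eV]
      cases y with
      | inl i =>
        show u.onV (Sum.inl i) = u'.onV (Sum.inl i)
        rw [u.hL, u'.hL, onL_eq hx hx']
      | inr w => exact haInv w
    · simp only [GMor.comp_onE, GIso.toGMor_onE, GIso.symm_eE, GMor.compE_inl]
      exact haEInv e
  · -- comp c.toGMor v = v'
    refine GMor.ext' (funext fun y => ?_) (funext fun x => ?_)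
    · simp only [GMor.comp_onV, GIso.toGMor_onV]
      exact (compatV y).symm
    · simp only [GMor.comp_onE]
      rcases edge_val hx x with hvx | ⟨e, hvx⟩
      · rw [hvx]
        have hmem : ∃ e, u'.onE e = Sum.inl x :=
          Set.ext_iff.1 hrE x |>.1 ((imE_iff hx x).2 hvx)
        rw [(imE_iff hx' x).1 hmem]
        rfl
      · rw [hvx, GMor.compE_inl, GIso.toGMor_onE, hcEFun e x hvx]
        rfl

end Part6c
section Part7

variable {n m : ℕ} {α : PreGraph (n + 1)} {β : PreGraph (n + m + 1)} {γ : PreGraph (m + 1)}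
  {j : Fin (m + 1)}

theorem ExtAt.ext' {x y : ExtAt α γ j β} (hu : x.u = y.u) (hv : x.v = y.v) : x = y := by
  cases x; cases y
  simp only at hu hv
  subst hu; subst hv
  rfl

theorem part7 (S : SubG β) :
    Nat.card {x : ExtAt α γ j β // HasImage x.u S} = 0 ∨
    Nat.card {x : ExtAt α γ j β // HasImage x.u S} =
      Nat.card (GIso α α) * Nat.card (GIso γ γ) := by
  by_cases hne : Nonempty {x : ExtAt α γ j β // HasImage x.u S}
  · right
    obtain ⟨⟨x₀, hx₀⟩⟩ := hne
    let Φ : GIso α α × GIso γ γ → {x : ExtAt α γ j β // HasImage x.u S} := fun p =>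
      ⟨⟨GMor.comp x₀.u p.1.symm.toGMor, GMor.comp p.2.toGMor x₀.v,
        (part4 p.1 p.2 S x₀.u x₀.v x₀.ext hx₀).1⟩,
        (part4 p.1 p.2 S x₀.u x₀.v x₀.ext hx₀).2⟩
    have hinj : Function.Injective Φ := by
      rintro ⟨a, c⟩ ⟨a', c'⟩ hpq
      have hu : GMor.comp x₀.u a.symm.toGMor = GMor.comp x₀.u a'.symm.toGMor :=
        congrArg (fun z => z.val.u) hpq
      have hv : GMor.comp c.toGMor x₀.v = GMor.comp c'.toGMor x₀.v :=
        congrArg (fun z => z.val.v) hpq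
      have haV : ∀ w, a.eV.symm w = a'.eV.symm w := by
        intro w
        have := congrFun (congrArg GMor.onV hu) (Sum.inr w)
        simp only [GMor.comp_onV, GIso.toGMor_onV, GIso.symm_eV, Sum.map_inr] at this
        exact Sum.inr.inj (x₀.ext.uVinj this)
      have haE : ∀ e, a.eE.symm e = a'.eE.symm e := by
        intro e
        have := congrFun (congrArg GMor.onE hu) e
        simp only [GMor.comp_onE, GIso.toGMor_onE, GIso.symm_eE, GMor.compE_inl] at this
        exact x₀.ext.uEinj this
      have hcV : ∀ w, c.eV w = c'.eV w := by
        intro w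
        obtain ⟨x, hx⟩ := x₀.ext.vVsurj (Sum.inr w)
        have := congrFun (congrArg GMor.onV hv) x
        simp only [GMor.comp_onV, GIso.toGMor_onV, hx, Sum.map_inr] at this
        exact Sum.inr.inj this
      have hcE : ∀ e, c.eE e = c'.eE e := by
        intro e
        obtain ⟨x, hx⟩ := x₀.ext.vEsurj e
        have := congrFun (congrArg GMor.onE hv) x
        simp only [GMor.comp_onE, hx, GMor.compE_inl, GIso.toGMor_onE,
          Sum.inl.injEq] at this
        exact this
      have ha : a = a' := by
        refine GIso.ext' (fun w => ?_) (fun e => ?_)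
        · have h1 : a'.eV.symm (a.eV w) = w := by rw [← haV, Equiv.symm_apply_apply]
          calc a.eV w = a'.eV (a'.eV.symm (a.eV w)) := (a'.eV.apply_symm_apply _).symm
          _ = a'.eV w := by rw [h1]
        · have h1 : a'.eE.symm (a.eE e) = e := by rw [← haE, Equiv.symm_apply_apply]
          calc a.eE e = a'.eE (a'.eE.symm (a.eE e)) := (a'.eE.apply_symm_apply _).symm
          _ = a'.eE e := by rw [h1]
      have hc : c = c' := GIso.ext' hcV hcE
      rw [ha, hc]
    have hsurj : Function.Surjective Φ := by
      rintro ⟨x, hxS⟩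
      obtain ⟨a, c, h1, h2⟩ := part6 S x₀.u x₀.v x.u x.v x₀.ext x.ext hx₀ hxS
      exact ⟨⟨a, c⟩, Subtype.ext (ExtAt.ext' h1 h2)⟩
    rw [← Nat.card_congr (Equiv.ofBijective Φ ⟨hinj, hsurj⟩), Nat.card_prod]
  · left
    rw [not_nonempty_iff] at hne
    exact Nat.card_of_isEmpty

end Part7

/-- counting core of the Lemma on partial composition.
(i) `Aut β` acts freely on the set of extensions of `γ` by `α` at `j` with middle graph `β`
via `θ·(u, v) = (θ∘u, v∘θ⁻¹)`, and its orbits are exactly the equivalence classes of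
extensions.
(ii) For each subgraph `S ⊆ β`, the group `Aut α × Aut γ` acts freely and transitively on the
set of such extensions whose image is `S`, via `(a, c)·(u, v) = (u∘a⁻¹, c∘v)`; consequently
the number of extensions with image `S` is either `0` or `|Aut α|·|Aut γ|`. -/
theorem extension_counting_core
    {n m : ℕ} (α : PreGraph (n + 1)) (γ : PreGraph (m + 1)) (j : Fin (m + 1))
    (β : PreGraph (n + m + 1)) (hα : α.IsGraph) (hγ : γ.IsGraph) (hβ : β.IsGraph) :
    -- (i) the action of `Aut β` is well defined on extensions …
    (∀ (θ : GIso β β) (u : GMor α β) (v : GMor β γ), IsExtension j u v →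
      IsExtension j (GMor.comp θ.toGMor u) (GMor.comp v θ.symm.toGMor)) ∧
    -- … it is free …
    (∀ (θ : GIso β β) (u : GMor α β) (v : GMor β γ), IsExtension j u v →
      GMor.comp θ.toGMor u = u → GMor.comp v θ.symm.toGMor = v →
      (∀ w : β.V, θ.eV w = w) ∧ (∀ e : β.E, θ.eE e = e)) ∧
    -- … and its orbits are precisely the equivalence classes of extensions.
    (∀ (u : GMor α β) (v : GMor β γ) (u' : GMor α β) (v' : GMor β γ),
      IsExtension j u v → IsExtension j u' v' →
      ((∃ θ : GIso β β, GMor.comp θ.toGMor u = u' ∧ GMor.comp v' θ.toGMor = v) ↔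
       (∃ θ : GIso β β, GMor.comp θ.toGMor u = u' ∧ GMor.comp v θ.symm.toGMor = v'))) ∧
    -- (ii) the action of `Aut α × Aut γ` is well defined on extensions with image `S` …
    (∀ (a : GIso α α) (c : GIso γ γ) (S : SubG β) (u : GMor α β) (v : GMor β γ),
      IsExtension j u v → HasImage u S →
      IsExtension j (GMor.comp u a.symm.toGMor) (GMor.comp c.toGMor v) ∧
        HasImage (GMor.comp u a.symm.toGMor) S) ∧
    -- … it is free …
    (∀ (a : GIso α α) (c : GIso γ γ) (u : GMor α β) (v : GMor β γ), IsExtension j u v →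
      GMor.comp u a.symm.toGMor = u → GMor.comp c.toGMor v = v →
      ((∀ w : α.V, a.eV w = w) ∧ (∀ e : α.E, a.eE e = e)) ∧
      ((∀ w : γ.V, c.eV w = w) ∧ (∀ e : γ.E, c.eE e = e))) ∧
    -- … and transitive on extensions with a common image `S`.
    (∀ (S : SubG β) (u : GMor α β) (v : GMor β γ) (u' : GMor α β) (v' : GMor β γ),
      IsExtension j u v → IsExtension j u' v' → HasImage u S → HasImage u' S →
      ∃ (a : GIso α α) (c : GIso γ γ),
        GMor.comp u a.symm.toGMor = u' ∧ GMor.comp c.toGMor v = v') ∧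
    -- Consequently, the number of extensions with image `S` is `0` or `|Aut α|·|Aut γ|`.
    (∀ S : SubG β,
      Nat.card {x : ExtAt α γ j β // HasImage x.u S} = 0 ∨
      Nat.card {x : ExtAt α γ j β // HasImage x.u S} =
        Nat.card (GIso α α) * Nat.card (GIso γ γ)) := by
  refine ⟨part1, part2, ?_, fun a c S u v h hS => part4 a c S u v h hS, part5, part6,
    part7⟩
  intro u v u' v' hx hx'
  constructor
  · rintro ⟨θ, h1, h2⟩
    exact ⟨θ, h1, by rw [← h2, cancelA]⟩
  · rintro ⟨θ, h1, h2⟩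
    exact ⟨θ, h1, by rw [← h2, cancelB]⟩
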